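/- For q_{ω,ii}(n) = b_i²/(2dη) − (n−1)γ b_i²/(d n(2d² + γηn)), the derivative with respect to n satisfies ∂q_{ω,ii}/∂n = γ(γηn² − 2γηn − 2d²) b_i²/(d(2d²n + γηn²)²), which is strictly positive whenever n > 1 + √(1 + 2d²/(γη)). Also ∂q_{ω,jj}/∂n = −γ(2d² + 2γηn)b_i²/(d(2d²n + γηn²)²) < 0 for q_{ω,jj}(n) = γ b_i²/(dn(2d²+γηn)). -/

import Mathlib

/-- Derivatives with respect to the (real) network size `n` of the complete-graph
frequency variances with a single disturbance at node `i`, and their signs. -/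
theorem stmt_13 (d η γ b n : ℝ) (hd : 0 < d) (hη : 0 < η) (hγ : 0 < γ)
    (hb : b ≠ 0) (hn : 1 < n) :
    HasDerivAt (fun x : ℝ =>
        b ^ 2 / (2 * d * η) - (x - 1) * γ * b ^ 2 / (d * x * (2 * d ^ 2 + γ * η * x)))
      (γ * (γ * η * n ^ 2 - 2 * γ * η * n - 2 * d ^ 2) * b ^ 2
        / (d * (2 * d ^ 2 * n + γ * η * n ^ 2) ^ 2)) n ∧
    (1 + Real.sqrt (1 + 2 * d ^ 2 / (γ * η)) < n →
      0 < γ * (γ * η * n ^ 2 - 2 * γ * η * n - 2 * d ^ 2) * b ^ 2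
        / (d * (2 * d ^ 2 * n + γ * η * n ^ 2) ^ 2)) ∧
    HasDerivAt (fun x : ℝ => γ * b ^ 2 / (d * x * (2 * d ^ 2 + γ * η * x)))
      (-(γ * (2 * d ^ 2 + 2 * γ * η * n) * b ^ 2
        / (d * (2 * d ^ 2 * n + γ * η * n ^ 2) ^ 2))) n ∧
    -(γ * (2 * d ^ 2 + 2 * γ * η * n) * b ^ 2
        / (d * (2 * d ^ 2 * n + γ * η * n ^ 2) ^ 2)) < 0 := by
  have hn0 : 0 < n := lt_trans one_pos hn
  have hd2 : 0 < 2 * d ^ 2 + γ * η * n := by positivity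
  have hden : d * n * (2 * d ^ 2 + γ * η * n) ≠ 0 := by positivity
  have hden2 : (0:ℝ) < d * (2 * d ^ 2 * n + γ * η * n ^ 2) ^ 2 := by positivity
  have hb2 : (0:ℝ) < b ^ 2 := by positivity
  -- derivative of denominator D(x) = d*x*(2d²+γηx)
  have hD : HasDerivAt (fun x : ℝ => d * x * (2 * d ^ 2 + γ * η * x))
      (d * (2 * d ^ 2 + γ * η * n) + d * n * (γ * η)) n := by
    have h1 : HasDerivAt (fun x : ℝ => d * x) d n := by
      simpa using (hasDerivAt_id n).const_mul d
    have h2 : HasDerivAt (fun x : ℝ => 2 * d ^ 2 + γ * η * x) (γ * η) n := by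
      simpa using ((hasDerivAt_id n).const_mul (γ * η)).const_add (2 * d ^ 2)
    exact h1.mul h2
  have hN1 : HasDerivAt (fun x : ℝ => (x - 1) * γ * b ^ 2) (γ * b ^ 2) n := by
    have : HasDerivAt (fun x : ℝ => x - 1) 1 n := (hasDerivAt_id n).sub_const 1
    simpa [mul_assoc] using this.mul_const (γ * b ^ 2)
  constructor
  · have h := ((hasDerivAt_const n (b ^ 2 / (2 * d * η))).sub ((hN1.div hD) hden))
    refine h.congr_deriv ?_
    field_simp
    ring
  refine ⟨?_, ?_, ?_⟩
  · intro hs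
    have hs0 : (0:ℝ) ≤ Real.sqrt (1 + 2 * d ^ 2 / (γ * η)) := Real.sqrt_nonneg _
    have h1 : Real.sqrt (1 + 2 * d ^ 2 / (γ * η)) < n - 1 := by linarith
    have h2 : 1 + 2 * d ^ 2 / (γ * η) < (n - 1) ^ 2 := by
      have := Real.sq_sqrt (by positivity : (0:ℝ) ≤ 1 + 2 * d ^ 2 / (γ * η))
      nlinarith [Real.sqrt_nonneg (1 + 2 * d ^ 2 / (γ * η))]
    have hge : (0:ℝ) < γ * η := by positivity
    have h3 : 0 < γ * η * n ^ 2 - 2 * γ * η * n - 2 * d ^ 2 := by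
      have h4 : γ * η * (1 + 2 * d ^ 2 / (γ * η)) < γ * η * (n - 1) ^ 2 :=
        (mul_lt_mul_iff_right₀ hge).2 h2
      have h5 : γ * η * (1 + 2 * d ^ 2 / (γ * η)) = γ * η + 2 * d ^ 2 := by
        field_simp
      nlinarith
    positivity
  · have h := (hasDerivAt_const n (γ * b ^ 2)).div hD hden
    refine h.congr_deriv ?_
    field_simp
    ring
  · have : (0:ℝ) < γ * (2 * d ^ 2 + 2 * γ * η * n) * b ^ 2
        / (d * (2 * d ^ 2 * n + γ * η * n ^ 2) ^ 2) := by positivity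
    linarith
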